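/- Let n, d, t ≥ 1 be integers and let u = x_{i_1}x_{i_2}⋯x_{i_d}, v ∈ M_{n,d,t} with u ≥_slex v. Then the following two conditions are equivalent: (b) for every ω ∈ M_{n,d,t} with ω <_slex v there exists an integer s > i_1 such that x_s divides ω and x_{i_1}(ω/x_s) ≤_lex u; (b') for every ω ∈ M_{n−(d−1)(t−1),d,1} with ω <_slex v^{τ^{t−1}} there exists an integer i > i_1 such that x_i divides ω and x_{i_1}(ω/x_i) ≤_lex u^{τ^{t−1}}. -/

import Mathlib

open MvPolynomial

/-- A degree-`d` `t`-spread monomial of `K[x_1,…,x_n]`, recorded by its weakly increasing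
(1-based) sequence of variable indices `idx 0 ≤ idx 1 ≤ ⋯` with consecutive gaps at least `t`.
For `t ≥ 1` these are exactly the `t`-spread monomials `x_{i_1}⋯x_{i_d}` with
`i_{j+1} - i_j ≥ t`, and for `t = 0` all monomials of degree `d` (written with sorted indices). -/
structure SpreadMono (n d t : ℕ) where
  idx : Fin d → ℕ
  one_le : ∀ j, 1 ≤ idx j
  le_n : ∀ j, idx j ≤ n
  spread : ∀ (j : Fin d) (h : (j : ℕ) + 1 < d), idx j + t ≤ idx ⟨(j : ℕ) + 1, h⟩

namespace SpreadMono

variable {n d t : ℕ}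

/-- The (0-based) variable of `Fin n` corresponding to the `j`-th (1-based) index. -/
def var (u : SpreadMono n d t) (j : Fin d) : Fin n :=
  ⟨u.idx j - 1, by have h1 := u.one_le j; have h2 := u.le_n j; omega⟩

/-- The exponent vector of the monomial `x_{i_1}⋯x_{i_d}`. -/
noncomputable def expVec (u : SpreadMono n d t) : Fin n →₀ ℕ :=
  ∑ j, Finsupp.single (u.var j) 1

/-- The monomial `x_{i_1}⋯x_{i_d}` as an element of `MvPolynomial (Fin n) K`. -/
noncomputable def toMvPoly (K : Type*) [Field K] (u : SpreadMono n d t) :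
    MvPolynomial (Fin n) K :=
  MvPolynomial.monomial u.expVec 1

/-- Strict lexicographic order on index sequences. -/
def seqLT (f g : Fin d → ℕ) : Prop :=
  ∃ s : Fin d, (∀ j, j < s → f j = g j) ∧ f s < g s

/-- Lexicographic order (≤) on index sequences. -/
def seqLE (f g : Fin d → ℕ) : Prop := f = g ∨ seqLT f g

/-- `u ≥_slex v`: a monomial is `slex`-larger iff its index sequence is lex-smaller. -/
def slexGE (u v : SpreadMono n d t) : Prop := seqLE u.idx v.idx

/-- `u >_slex v`. -/
def slexGT (u v : SpreadMono n d t) : Prop := seqLT u.idx v.idx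

/-- The `t`-spread lexsegment `L_t(u,v) = {w : u ≥_slex w ≥_slex v}`. -/
def lexseg (u v : SpreadMono n d t) : Set (SpreadMono n d t) :=
  {w | slexGE u w ∧ slexGE w v}

/-- The initial `t`-spread lexsegment `L^i_t(v) = {w : w ≥_slex v}`. -/
def initialSeg (v : SpreadMono n d t) : Set (SpreadMono n d t) :=
  {w | slexGE w v}

/-- The final `t`-spread lexsegment `L^f_t(u) = {w : w ≤_slex u}`. -/
def finalSeg (u : SpreadMono n d t) : Set (SpreadMono n d t) :=
  {w | slexGE u w}

/-- The ideal of `MvPolynomial (Fin n) K` generated by a set of spread monomials. -/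
noncomputable def idealOf (K : Type*) [Field K] (A : Set (SpreadMono n d t)) :
    Ideal (MvPolynomial (Fin n) K) :=
  Ideal.span ((fun w => toMvPoly K w) '' A)

end SpreadMono

/-- `a ≤_lex b` for exponent vectors of monomials of `K[x_1,…,x_m]`, for the lexicographic
order with `x_1 > x_2 > ⋯ > x_m`: either `a = b`, or at the first position where they
differ `b` has the larger exponent. -/
def monoLE {m : ℕ} (a b : Fin m →₀ ℕ) : Prop :=
  a = b ∨ ∃ i : Fin m, (∀ j, j < i → a j = b j) ∧ a i < b i

open SpreadMono

-- ==== helpers ====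
section Helpers
variable {n d t : ℕ}

lemma SpreadMono.ext' {u v : SpreadMono n d t} (h : u.idx = v.idx) : u = v := by
  cases u; cases v; simp_all

lemma idx_le_aux (w : SpreadMono n d t) :
    ∀ (m : ℕ) (hm : m < d) (a : Fin d), (a : ℕ) ≤ m →
      w.idx a + (m - (a : ℕ)) * t ≤ w.idx ⟨m, hm⟩ := by
  intro m
  induction m with
  | zero =>
    intro hm a ha
    have : a = ⟨0, hm⟩ := Fin.ext (by simp; omega)
    subst this; simp
  | succ k ih =>
    intro hm a ha
    by_cases h : (a : ℕ) = k + 1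
    · have : a = ⟨k + 1, hm⟩ := Fin.ext h
      subst this; simp [h]
    · have ha' : (a : ℕ) ≤ k := by omega
      have hk : k < d := by omega
      have h1 := ih hk a ha'
      have h2 : w.idx ⟨k, hk⟩ + t ≤ w.idx ⟨k + 1, hm⟩ := w.spread ⟨k, hk⟩ (by simpa)
      have h3 : (k + 1 - (a : ℕ)) * t = (k - (a : ℕ)) * t + t := by
        rw [Nat.succ_sub ha', Nat.succ_mul]
      omega

lemma idx_ge (w : SpreadMono n d t) (j : Fin d) : 1 + (j : ℕ) * t ≤ w.idx j := by
  have h0 : 0 < d := lt_of_le_of_lt (Nat.zero_le _) j.2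
  have h1 := idx_le_aux w (j : ℕ) j.2 ⟨0, h0⟩ (Nat.zero_le _)
  have h2 := w.one_le ⟨0, h0⟩
  simp at h1
  omega

lemma idx_strictMono (ht : 1 ≤ t) (w : SpreadMono n d t) : StrictMono w.idx := by
  intro a b hab
  have h1 := idx_le_aux w (b : ℕ) b.2 a (le_of_lt hab)
  have hab' : (a : ℕ) < (b : ℕ) := hab
  have h2 : 1 * 1 ≤ ((b : ℕ) - (a : ℕ)) * t := Nat.mul_le_mul (by omega) ht
  simp at h1
  omega

lemma var_lt_iff (a b : SpreadMono n d t) (j k : Fin d) :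
    a.var j < b.var k ↔ a.idx j < b.idx k := by
  have := a.one_le j; have := b.one_le k
  simp [SpreadMono.var, Fin.lt_def]; omega

lemma var_eq_iff (a b : SpreadMono n d t) (j k : Fin d) :
    a.var j = b.var k ↔ a.idx j = b.idx k := by
  have := a.one_le j; have := b.one_le k
  simp [SpreadMono.var, Fin.ext_iff]; omega

lemma var_strictMono (ht : 1 ≤ t) (w : SpreadMono n d t) : StrictMono w.var :=
  fun a b h => (var_lt_iff w w a b).mpr (idx_strictMono ht w h)

lemma not_monoLE {N : ℕ} (a b : Fin N →₀ ℕ) (x1 : Fin N)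
    (hpre : ∀ x, x < x1 → a x = b x) (hgt : b x1 < a x1) : ¬ monoLE a b := by
  rintro (rfl | ⟨i, hpre', hlt⟩)
  · exact lt_irrefl _ hgt
  · rcases lt_trichotomy i x1 with h | h | h
    · have := hpre i h; omega
    · subst h; omega
    · have := hpre' x1 h; omega

lemma sum_mask {d : ℕ} (f : Fin d → ℕ) (ℓ : Fin d) :
    ∑ j, f j = f ℓ + ∑ j, (if j = ℓ then 0 else f j) := by
  classical
  have h1 : ∑ j, (if j = ℓ then 0 else f j)
      = ∑ j ∈ Finset.univ.erase ℓ, (if j = ℓ then 0 else f j) :=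
    (Finset.sum_erase _ (by simp)).symm
  have h2 : ∑ j ∈ Finset.univ.erase ℓ, (if j = ℓ then 0 else f j)
      = ∑ j ∈ Finset.univ.erase ℓ, f j := by
    refine Finset.sum_congr rfl ?_
    intro x hx
    rw [if_neg (Finset.ne_of_mem_erase hx)]
  rw [h1, h2, Finset.add_sum_erase _ f (Finset.mem_univ ℓ)]

lemma expVec_apply (w : SpreadMono n d t) (x : Fin n) :
    w.expVec x = ∑ j, (if w.var j = x then 1 else 0) := by
  simp [SpreadMono.expVec, Finsupp.finset_sum_apply, Finsupp.single_apply]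

lemma m_apply (u w : SpreadMono n d t) (z ℓ : Fin d) (x : Fin n) :
    ((w.expVec - Finsupp.single (w.var ℓ) 1 + Finsupp.single (u.var z) 1 : Fin n →₀ ℕ)) x
      = (if u.var z = x then 1 else 0)
        + ∑ j, (if j = ℓ then 0 else if w.var j = x then 1 else 0) := by
  rw [Finsupp.add_apply, Finsupp.tsub_apply, expVec_apply, Finsupp.single_apply,
    Finsupp.single_apply, sum_mask (fun j => if w.var j = x then 1 else 0) ℓ]
  omega

end Helpers

section Seq
variable {n d t : ℕ}

lemma seqLT_total {f g : Fin d → ℕ} (h : ¬ seqLE f g) : seqLT g f := by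
  classical
  have hne : f ≠ g := fun he => h (Or.inl he)
  have hex : ∃ s : Fin d, f s ≠ g s := by
    by_contra hc; push_neg at hc; exact hne (funext hc)
  set S := Finset.univ.filter (fun j : Fin d => f j ≠ g j) with hS
  have hSne : S.Nonempty := ⟨hex.choose, by simp [hS, hex.choose_spec]⟩
  set s := S.min' hSne with hs
  have hsS : s ∈ S := Finset.min'_mem _ _
  have hdiff : f s ≠ g s := by simpa [hS] using hsS
  have hpre : ∀ j, j < s → f j = g j := by
    intro j hj
    by_contra hc
    have hjS : j ∈ S := by simp [hS, hc]
    exact absurd (Finset.min'_le S j hjS) (not_le.mpr hj)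
  rcases lt_or_gt_of_ne hdiff with h' | h'
  · exact absurd (Or.inr ⟨s, hpre, h'⟩) h
  · exact ⟨s, fun j hj => (hpre j hj).symm, h'⟩

lemma seqLT_shift {f g f' g' c : Fin d → ℕ} (hf : ∀ j, f' j = f j - c j)
    (hg : ∀ j, g' j = g j - c j) (hbf : ∀ j, c j < f j) (hbg : ∀ j, c j < g j) :
    seqLT f g ↔ seqLT f' g' := by
  constructor
  · rintro ⟨s, hpre, hlt⟩
    refine ⟨s, fun j hj => ?_, ?_⟩
    · have := hpre j hj; have := hbf j; have := hbg j; rw [hf, hg]; omega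
    · have := hbf s; have := hbg s; rw [hf, hg]; omega
  · rintro ⟨s, hpre, hlt⟩
    refine ⟨s, fun j hj => ?_, ?_⟩
    · have h1 := hpre j hj; have := hbf j; have := hbg j; rw [hf j, hg j] at h1; omega
    · have := hbf s; have := hbg s; rw [hf s, hg s] at hlt; omega

lemma seqLE_shift {f g f' g' c : Fin d → ℕ} (hf : ∀ j, f' j = f j - c j)
    (hg : ∀ j, g' j = g j - c j) (hbf : ∀ j, c j < f j) (hbg : ∀ j, c j < g j) :
    seqLE f g ↔ seqLE f' g' := by
  unfold seqLE
  apply or_congr _ (seqLT_shift hf hg hbf hbg)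
  constructor
  · rintro rfl
    funext j; rw [hf, hg]
  · intro h
    funext j
    have h1 : f' j = g' j := congrFun h j
    have := hbf j; have := hbg j
    rw [hf j, hg j] at h1; omega

lemma seqLE_head (hd : 1 ≤ d) {f g : Fin d → ℕ} (h : seqLE f g) :
    f ⟨0, hd⟩ ≤ g ⟨0, hd⟩ := by
  rcases h with rfl | ⟨s, hpre, hlt⟩
  · exact le_refl _
  · rcases eq_or_lt_of_le (show (⟨0, hd⟩ : Fin d) ≤ s by simp [Fin.le_def]) with h | h
    · rw [← h] at hlt; exact hlt.le
    · exact (hpre _ h).le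

lemma tau_surj (ht : 1 ≤ t) (hd : 1 ≤ d) (hbig : 1 + (d - 1) * t ≤ n)
    (τ : SpreadMono n d t → SpreadMono (n - (d - 1) * (t - 1)) d 1)
    (hτ : ∀ w j, (τ w).idx j = w.idx j - (j : ℕ) * (t - 1))
    (w' : SpreadMono (n - (d - 1) * (t - 1)) d 1) : ∃ w, τ w = w' := by
  have hA : (d - 1) * (t - 1) ≤ (d - 1) * t := Nat.mul_le_mul_left _ (by omega)
  refine ⟨⟨fun j => w'.idx j + (j : ℕ) * (t - 1), ?_, ?_, ?_⟩, ?_⟩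
  · intro j; have := w'.one_le j; omega
  · intro j
    have h1 := w'.le_n j
    have h2 : (j : ℕ) * (t - 1) ≤ (d - 1) * (t - 1) :=
      Nat.mul_le_mul_right _ (by have := j.2; omega)
    omega
  · intro j h
    have h1 := w'.spread j h
    have h2 : ((j : ℕ) + 1) * (t - 1) = (j : ℕ) * (t - 1) + (t - 1) := by ring
    dsimp only at h1 ⊢
    omega
  · apply SpreadMono.ext'
    funext j
    rw [hτ]
    simp
end Seq

lemma cond_iff {n d t : ℕ} (ht : 1 ≤ t) (hd : 1 ≤ d) (u w : SpreadMono n d t)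
    (h0 : u.idx ⟨0, hd⟩ ≤ w.idx ⟨0, hd⟩) :
    (∃ ℓ : Fin d, u.idx ⟨0, hd⟩ < w.idx ℓ ∧
        monoLE (w.expVec - Finsupp.single (w.var ℓ) 1 + Finsupp.single (u.var ⟨0, hd⟩) 1)
          u.expVec)
    ↔ (u.idx ⟨0, hd⟩ < w.idx ⟨0, hd⟩ ∧
        seqLE u.idx (fun j => if j = ⟨0, hd⟩ then u.idx ⟨0, hd⟩ else w.idx j)) := by
  set z0 : Fin d := ⟨0, hd⟩ with hz0d
  have huV := var_strictMono ht u
  have hwV := var_strictMono ht w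
  have hz0 : ∀ j : Fin d, z0 ≤ j := fun j => by simp [hz0d, Fin.le_def]
  rcases eq_or_lt_of_le h0 with heq | hlt
  · -- Case A : equal first indices; both sides false
    constructor
    · rintro ⟨ℓ, hℓ, hm⟩
      exfalso
      have hℓz : ℓ ≠ z0 := fun h => by rw [h] at hℓ; omega
      have hwz : w.var z0 = u.var z0 := (var_eq_iff w u z0 z0).mpr heq.symm
      refine not_monoLE _ _ (u.var z0) ?_ ?_ hm
      · intro x hx
        rw [m_apply, expVec_apply]
        have e2 : ∑ j, (if j = ℓ then 0 else if w.var j = x then (1:ℕ) else 0) = 0 := by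
          refine Finset.sum_eq_zero fun j _ => ?_
          have hxj : x < w.var j :=
            lt_of_lt_of_le hx (by rw [← hwz]; exact hwV.monotone (hz0 j))
          simp [hxj.ne']
        have e3 : ∑ j, (if u.var j = x then (1:ℕ) else 0) = 0 := by
          refine Finset.sum_eq_zero fun j _ => ?_
          have hxj : x < u.var j := lt_of_lt_of_le hx (huV.monotone (hz0 j))
          simp [hxj.ne']
        rw [e2, e3, if_neg hx.ne']
      · rw [m_apply, expVec_apply]
        have e3 : ∑ j, (if u.var j = u.var z0 then (1:ℕ) else 0) = 1 := by
          rw [sum_mask (fun j => if u.var j = u.var z0 then (1:ℕ) else 0) z0]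
          have e0 : ∑ j, (if j = z0 then 0 else if u.var j = u.var z0 then (1:ℕ) else 0) = 0 := by
            refine Finset.sum_eq_zero fun j _ => ?_
            by_cases hj : j = z0
            · simp [hj]
            · have h1 : u.var z0 < u.var j := huV (lt_of_le_of_ne (hz0 j) (Ne.symm hj))
              simp [hj, h1.ne']
          rw [e0, if_pos rfl]
        have e4 : 1 ≤ ∑ j, (if j = ℓ then 0 else if w.var j = u.var z0 then (1:ℕ) else 0) := by
          have hterm := Finset.single_le_sum
            (f := fun j => if j = ℓ then 0 else if w.var j = u.var z0 then (1:ℕ) else 0)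
            (fun i _ => Nat.zero_le _) (Finset.mem_univ z0)
          rw [if_neg (Ne.symm hℓz), if_pos hwz] at hterm
          exact hterm
        rw [e3, if_pos rfl]
        omega
    · rintro ⟨hlt', -⟩; omega
  · -- Case B : strict first indices
    have hvlt : u.var z0 < w.var z0 := (var_lt_iff u w z0 z0).mpr hlt
    constructor
    · rintro ⟨ℓ, hℓ, hm⟩
      refine ⟨hlt, ?_⟩
      by_contra hc
      obtain ⟨s, hpre, hslt⟩ := seqLT_total hc
      dsimp only at hpre hslt
      have hsz : s ≠ z0 := by
        intro h; rw [h] at hslt; simp at hslt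
      have hz0s : z0 < s := lt_of_le_of_ne (hz0 s) (Ne.symm hsz)
      have hws : w.idx s < u.idx s := by rw [if_neg hsz] at hslt; exact hslt
      have hprew : ∀ j, z0 < j → j < s → w.idx j = u.idx j := by
        intro j h1 h2
        have h3 := hpre j h2
        rwa [if_neg h1.ne'] at h3
      have hwsu : w.var s < u.var s := (var_lt_iff w u s s).mpr hws
      by_cases hcase : ℓ = z0
      · -- N2 : ℓ = z0, first difference at w.var s
        refine not_monoLE _ _ (w.var s) ?_ ?_ hm
        · intro x hx
          rw [m_apply, expVec_apply,
            sum_mask (fun j => if u.var j = x then (1:ℕ) else 0) z0, hcase]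
          congr 1
          refine Finset.sum_congr rfl fun j _ => ?_
          by_cases hj : j = z0
          · simp [hj]
          · rw [if_neg hj, if_neg hj]
            rcases lt_or_ge j s with hjs | hjs
            · have hv : w.var j = u.var j :=
                (var_eq_iff w u j j).mpr (hprew j (lt_of_le_of_ne (hz0 j) (Ne.symm hj)) hjs)
              rw [hv]
            · have h1 : x < w.var j := lt_of_lt_of_le hx (hwV.monotone hjs)
              have h2 : x < u.var j :=
                lt_of_lt_of_le (lt_trans hx hwsu) (huV.monotone hjs)
              rw [if_neg h1.ne', if_neg h2.ne']
        · rw [m_apply, expVec_apply]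
          have e3 : ∑ j, (if u.var j = w.var s then (1:ℕ) else 0) = 0 := by
            refine Finset.sum_eq_zero fun j _ => ?_
            rcases lt_or_ge j s with hjs | hjs
            · by_cases hj : j = z0
              · have h1 : u.var j < w.var s := by
                  rw [hj]; exact lt_of_lt_of_le hvlt (hwV.monotone (hz0 s))
                rw [if_neg h1.ne]
              · have hv : u.var j = w.var j :=
                  ((var_eq_iff w u j j).mpr
                    (hprew j (lt_of_le_of_ne (hz0 j) (Ne.symm hj)) hjs)).symm
                have h1 : w.var j < w.var s := hwV hjs
                rw [hv, if_neg h1.ne]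
            · have h2 : w.var s < u.var j := lt_of_lt_of_le hwsu (huV.monotone hjs)
              rw [if_neg h2.ne']
          have e4 : 1 ≤ ∑ j, (if j = ℓ then 0 else if w.var j = w.var s then (1:ℕ) else 0) := by
            have hterm := Finset.single_le_sum
              (f := fun j => if j = ℓ then 0 else if w.var j = w.var s then (1:ℕ) else 0)
              (fun i _ => Nat.zero_le _) (Finset.mem_univ s)
            rw [if_neg (by rw [hcase]; exact hsz), if_pos rfl] at hterm
            exact hterm
          have hne : u.var z0 ≠ w.var s :=
            (lt_of_lt_of_le hvlt (hwV.monotone (hz0 s))).ne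
          rw [e3, if_neg hne]
          omega
      · -- N1 : ℓ ≠ z0, first difference at w.var z0
        refine not_monoLE _ _ (w.var z0) ?_ ?_ hm
        · intro x hx
          rw [m_apply, expVec_apply,
            sum_mask (fun j => if u.var j = x then (1:ℕ) else 0) z0]
          have e1 : ∑ j, (if j = ℓ then 0 else if w.var j = x then (1:ℕ) else 0) = 0 := by
            refine Finset.sum_eq_zero fun j _ => ?_
            have h1 : x < w.var j := lt_of_lt_of_le hx (hwV.monotone (hz0 j))
            simp [h1.ne']
          have e2 : ∑ j, (if j = z0 then 0 else if u.var j = x then (1:ℕ) else 0) = 0 := by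
            refine Finset.sum_eq_zero fun j _ => ?_
            by_cases hj : j = z0
            · simp [hj]
            · rw [if_neg hj]
              rcases lt_or_ge j s with hjs | hjs
              · have hv : u.var j = w.var j :=
                  ((var_eq_iff w u j j).mpr
                    (hprew j (lt_of_le_of_ne (hz0 j) (Ne.symm hj)) hjs)).symm
                have h1 : x < w.var j := lt_of_lt_of_le hx (hwV.monotone (hz0 j))
                rw [hv, if_neg h1.ne']
              · have h1 : x < u.var j :=
                  lt_of_lt_of_le (lt_trans hx (lt_of_le_of_lt (hwV.monotone (hz0 s)) hwsu))
                    (huV.monotone hjs)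
                rw [if_neg h1.ne']
          rw [e1, e2]
        · rw [m_apply, expVec_apply]
          have e3 : ∑ j, (if u.var j = w.var z0 then (1:ℕ) else 0) = 0 := by
            refine Finset.sum_eq_zero fun j _ => ?_
            by_cases hj : j = z0
            · have h1 : u.var j < w.var z0 := by rw [hj]; exact hvlt
              rw [if_neg h1.ne]
            · rcases lt_or_ge j s with hjs | hjs
              · have hv : u.var j = w.var j :=
                  ((var_eq_iff w u j j).mpr
                    (hprew j (lt_of_le_of_ne (hz0 j) (Ne.symm hj)) hjs)).symm
                have h1 : w.var z0 < w.var j := hwV (lt_of_le_of_ne (hz0 j) (Ne.symm hj))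
                rw [hv, if_neg h1.ne']
              · have h1 : w.var z0 < u.var j :=
                  lt_of_le_of_lt (hwV.monotone (hz0 s))
                    (lt_of_lt_of_le hwsu (huV.monotone hjs))
                rw [if_neg h1.ne']
          have e4 : 1 ≤ ∑ j, (if j = ℓ then 0 else if w.var j = w.var z0 then (1:ℕ) else 0) := by
            have hterm := Finset.single_le_sum
              (f := fun j => if j = ℓ then 0 else if w.var j = w.var z0 then (1:ℕ) else 0)
              (fun i _ => Nat.zero_le _) (Finset.mem_univ z0)
            rw [if_neg (fun h => hcase h.symm), if_pos rfl] at hterm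
            exact hterm
          have hne : u.var z0 ≠ w.var z0 := hvlt.ne
          rw [e3, if_neg hne]
          omega
    · -- sufficiency
      rintro ⟨-, hle⟩
      refine ⟨z0, hlt, ?_⟩
      rcases hle with heqF | ⟨s, hpre, hslt⟩
      · left
        ext x
        rw [m_apply, expVec_apply,
          sum_mask (fun j => if u.var j = x then (1:ℕ) else 0) z0]
        congr 1
        refine Finset.sum_congr rfl fun j _ => ?_
        by_cases hj : j = z0
        · simp [hj]
        · have h1 : u.idx j = w.idx j := by
            have h2 := congrFun heqF j
            try dsimp only at h2
            rwa [if_neg hj] at h2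
          have hv : w.var j = u.var j := (var_eq_iff w u j j).mpr h1.symm
          rw [if_neg hj, if_neg hj, hv]
      · try dsimp only at hpre hslt
        have hsz : s ≠ z0 := by
          intro h; rw [h] at hslt; simp at hslt
        have hz0s : z0 < s := lt_of_le_of_ne (hz0 s) (Ne.symm hsz)
        have hws : u.idx s < w.idx s := by rwa [if_neg hsz] at hslt
        have hwsu : u.var s < w.var s := (var_lt_iff u w s s).mpr hws
        have hprew : ∀ j, z0 < j → j < s → u.idx j = w.idx j := by
          intro j h1 h2
          have h3 := hpre j h2
          rwa [if_neg h1.ne'] at h3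
        right
        refine ⟨u.var s, ?_, ?_⟩
        · intro x hx
          rw [m_apply, expVec_apply,
            sum_mask (fun j => if u.var j = x then (1:ℕ) else 0) z0]
          congr 1
          refine Finset.sum_congr rfl fun j _ => ?_
          by_cases hj : j = z0
          · simp [hj]
          · rw [if_neg hj, if_neg hj]
            rcases lt_or_ge j s with hjs | hjs
            · have hv : w.var j = u.var j :=
                (var_eq_iff w u j j).mpr
                  (hprew j (lt_of_le_of_ne (hz0 j) (Ne.symm hj)) hjs).symm
              rw [hv]
            · have h1 : x < w.var j :=
                lt_of_lt_of_le (lt_trans hx hwsu) (hwV.monotone hjs)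
              have h2 : x < u.var j := lt_of_lt_of_le hx (huV.monotone hjs)
              rw [if_neg h1.ne', if_neg h2.ne']
        · rw [m_apply, expVec_apply]
          have e3 : 1 ≤ ∑ j, (if u.var j = u.var s then (1:ℕ) else 0) := by
            have hterm := Finset.single_le_sum
              (f := fun j => if u.var j = u.var s then (1:ℕ) else 0)
              (fun i _ => Nat.zero_le _) (Finset.mem_univ s)
            rw [if_pos rfl] at hterm
            exact hterm
          have e1 : ∑ j, (if j = z0 then 0 else if w.var j = u.var s then (1:ℕ) else 0) = 0 := by
            refine Finset.sum_eq_zero fun j _ => ?_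
            by_cases hj : j = z0
            · simp [hj]
            · rw [if_neg hj]
              rcases lt_or_ge j s with hjs | hjs
              · have hv : w.var j = u.var j :=
                  (var_eq_iff w u j j).mpr
                    (hprew j (lt_of_le_of_ne (hz0 j) (Ne.symm hj)) hjs).symm
                have h1 : u.var j < u.var s := huV hjs
                rw [hv, if_neg h1.ne]
              · have h1 : u.var s < w.var j := lt_of_lt_of_le hwsu (hwV.monotone hjs)
                rw [if_neg h1.ne']
          have hne : u.var z0 ≠ u.var s := (huV hz0s).ne
          rw [e1, if_neg hne]
          omega


/-- **Lemma (conditions (b) and (b') are equivalent).** Let `u = x_{i_1}⋯x_{i_d} ≥_slex v`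
in `M_{n,d,t}` and let `τ = τ^{t-1} : M_{n,d,t} → M_{n-(d-1)(t-1),d,1}` be the shifting
operator. Then: (b) for every `ω ∈ M_{n,d,t}` with `ω <_slex v` there is `s > i_1` with
`x_s ∣ ω` and `x_{i_1}(ω/x_s) ≤_lex u`, iff (b') for every `ω ∈ M_{n-(d-1)(t-1),d,1}` with
`ω <_slex v^{τ^{t-1}}` there is `i > i_1` with `x_i ∣ ω` and
`x_{i_1}(ω/x_i) ≤_lex u^{τ^{t-1}}`. -/
theorem stmt9 (n d t : ℕ) (hn : 1 ≤ n) (hd : 1 ≤ d) (ht : 1 ≤ t)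
    (u v : SpreadMono n d t) (huv : slexGE u v)
    (τ : SpreadMono n d t → SpreadMono (n - (d - 1) * (t - 1)) d 1)
    (hτ : ∀ w j, (τ w).idx j = w.idx j - (j : ℕ) * (t - 1)) :
    (∀ w : SpreadMono n d t, slexGT v w →
        ∃ ℓ : Fin d, u.idx ⟨0, hd⟩ < w.idx ℓ ∧
          monoLE (w.expVec - Finsupp.single (w.var ℓ) 1 + Finsupp.single (u.var ⟨0, hd⟩) 1)
            u.expVec) ↔
    (∀ w : SpreadMono (n - (d - 1) * (t - 1)) d 1, slexGT (τ v) w →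
        ∃ ℓ : Fin d, u.idx ⟨0, hd⟩ < w.idx ℓ ∧
          monoLE (w.expVec - Finsupp.single (w.var ℓ) 1 +
              Finsupp.single ((τ u).var ⟨0, hd⟩) 1)
            (τ u).expVec) := by
  have hbig : 1 + (d - 1) * t ≤ n := by
    have h1 := idx_ge u ⟨d - 1, by omega⟩
    have h2 := u.le_n ⟨d - 1, by omega⟩
    exact le_trans h1 h2
  have hb : ∀ (a : SpreadMono n d t) (j : Fin d), (j : ℕ) * (t - 1) < a.idx j := by
    intro a j
    have h1 := idx_ge a j
    have h2 : (j : ℕ) * (t - 1) ≤ (j : ℕ) * t := Nat.mul_le_mul_left _ (by omega)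
    omega
  have hshiftLT : ∀ a b : SpreadMono n d t, slexGT a b ↔ slexGT (τ a) (τ b) :=
    fun a b => seqLT_shift (hτ a) (hτ b) (hb a) (hb b)
  have hτ0 : ∀ a : SpreadMono n d t, (τ a).idx ⟨0, hd⟩ = a.idx ⟨0, hd⟩ := by
    intro a; rw [hτ]; simp
  have hDshift : ∀ a b : SpreadMono n d t,
      seqLE a.idx (fun j => if j = ⟨0, hd⟩ then a.idx ⟨0, hd⟩ else b.idx j) ↔
      seqLE (τ a).idx (fun j => if j = ⟨0, hd⟩ then (τ a).idx ⟨0, hd⟩ else (τ b).idx j) := by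
    intro a b
    refine seqLE_shift (c := fun j => (j : ℕ) * (t - 1)) (hτ a) ?_ (hb a) ?_
    · intro j
      by_cases hj : j = ⟨0, hd⟩
      · rw [if_pos hj, if_pos hj, hτ0, hj]
        simp
      · rw [if_neg hj, if_neg hj, hτ]
    · intro j
      by_cases hj : j = ⟨0, hd⟩
      · rw [if_pos hj, hj]
        simpa using Nat.lt_of_lt_of_le Nat.zero_lt_one (a.one_le ⟨0, hd⟩)
      · rw [if_neg hj]
        exact hb b j
  constructor
  · intro hbcond w' hw'
    obtain ⟨w, rfl⟩ := tau_surj ht hd hbig τ hτ w'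
    have hvw : slexGT v w := (hshiftLT v w).mpr hw'
    have h0 : u.idx ⟨0, hd⟩ ≤ w.idx ⟨0, hd⟩ :=
      le_trans (seqLE_head hd huv) (seqLE_head hd (Or.inr hvw))
    have hD := (cond_iff ht hd u w h0).mp (hbcond w hvw)
    have hD2 : (τ u).idx ⟨0, hd⟩ < (τ w).idx ⟨0, hd⟩ ∧
        seqLE (τ u).idx (fun j => if j = ⟨0, hd⟩ then (τ u).idx ⟨0, hd⟩ else (τ w).idx j) := by
      refine ⟨?_, (hDshift u w).mp hD.2⟩
      rw [hτ0, hτ0]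
      exact hD.1
    obtain ⟨ℓ, h1, h2⟩ := (cond_iff (le_refl 1) hd (τ u) (τ w) (le_of_lt hD2.1)).mpr hD2
    exact ⟨ℓ, by rwa [hτ0] at h1, h2⟩
  · intro hbcond w hvw
    have hw' : slexGT (τ v) (τ w) := (hshiftLT v w).mp hvw
    obtain ⟨ℓ, h1, h2⟩ := hbcond (τ w) hw'
    have h1' : (τ u).idx ⟨0, hd⟩ < (τ w).idx ℓ := by rwa [hτ0]
    have h0 : u.idx ⟨0, hd⟩ ≤ w.idx ⟨0, hd⟩ :=
      le_trans (seqLE_head hd huv) (seqLE_head hd (Or.inr hvw))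
    have h0' : (τ u).idx ⟨0, hd⟩ ≤ (τ w).idx ⟨0, hd⟩ := by rw [hτ0, hτ0]; exact h0
    have hD2 := (cond_iff (le_refl 1) hd (τ u) (τ w) h0').mp ⟨ℓ, h1', h2⟩
    have hD : u.idx ⟨0, hd⟩ < w.idx ⟨0, hd⟩ ∧
        seqLE u.idx (fun j => if j = ⟨0, hd⟩ then u.idx ⟨0, hd⟩ else w.idx j) := by
      refine ⟨?_, (hDshift u w).mpr hD2.2⟩
      have := hD2.1
      rwa [hτ0, hτ0] at this
    exact (cond_iff ht hd u w h0).mpr hD
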